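/- Reproducing kernel splitting bound: let f be a continuous function on a torus 𝕋^d with normalized measure, V ∈ L_∞(𝕋^d) a kernel with f = f * V, and B a measurable set. Then ‖f‖_∞ ≤ ‖V‖_1 · sup_{u ∉ B} |f(u)| + |B| · ‖V‖_∞ · ‖f‖_∞; consequently if |B| · ‖V‖_∞ ≤ 1/2 then ‖f‖_∞ ≤ 2‖V‖_1 · sup_{u ∉ B} |f(u)|. -/

import Mathlib

open MeasureTheory Real
open scoped ENNReal

namespace RemezKernel

noncomputable section

instance : Fact (0 < 2 * π) := ⟨by positivity⟩

/-- The d-dimensional torus 𝕋^d. -/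
abbrev Torus (d : ℕ) := Fin d → AddCircle (2 * π)

/-- Normalized (probability) Haar measure on 𝕋^d. -/
def torusMeasure (d : ℕ) : Measure (Torus d) :=
  Measure.pi fun _ => AddCircle.haarAddCircle

/-- reproducing kernel splitting bound: if f = f * V then
‖f‖_∞ ≤ ‖V‖_1 sup_{Bᶜ}|f| + |B| ‖V‖_∞ ‖f‖_∞, and consequently if
|B| ‖V‖_∞ ≤ 1/2 then ‖f‖_∞ ≤ 2 ‖V‖_1 sup_{Bᶜ}|f|. -/
theorem kernel_splitting_bound
    {d : ℕ} (f V : Torus d → ℂ) (hf : Continuous f)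
    (V1 Vinf : ℝ)
    (hV1 : eLpNorm V 1 (torusMeasure d) = ENNReal.ofReal V1)
    (hVinf : eLpNorm V ⊤ (torusMeasure d) = ENNReal.ofReal Vinf)
    (hrep : ∀ x, f x = ∫ u, f u * V (x - u) ∂(torusMeasure d))
    (B : Set (Torus d)) (hB : MeasurableSet B) :
    (⨆ x, ‖f x‖) ≤ V1 * (⨆ u ∈ Bᶜ, ‖f u‖) +
        (torusMeasure d B).toReal * Vinf * ⨆ x, ‖f x‖ ∧
    ((torusMeasure d B).toReal * Vinf ≤ 1 / 2 →
      (⨆ x, ‖f x‖) ≤ 2 * V1 * ⨆ u ∈ Bᶜ, ‖f u‖) := by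
  classical
  set μ := torusMeasure d with hμdef
  have hprob : IsProbabilityMeasure μ := by
    rw [hμdef]; unfold torusMeasure; infer_instance
  set M := ⨆ x, ‖f x‖ with hMdef
  set MB := ⨆ u ∈ Bᶜ, ‖f u‖ with hMBdef
  have hMbdd : BddAbove (Set.range fun x => ‖f x‖) := (isCompact_range hf.norm).bddAbove
  have hM0 : 0 ≤ M := Real.iSup_nonneg fun x => norm_nonneg _
  have hMB0 : 0 ≤ MB := Real.iSup_nonneg fun u => Real.iSup_nonneg fun _ => norm_nonneg _
  have hfM : ∀ x, ‖f x‖ ≤ M := fun x => le_ciSup hMbdd x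
  have hinner : ∀ u : Torus d, (⨆ _ : u ∈ Bᶜ, ‖f u‖) ≤ M := fun u =>
    Real.iSup_le (fun _ => hfM u) hM0
  have hMBbdd : BddAbove (Set.range fun u => ⨆ _ : u ∈ Bᶜ, ‖f u‖) := by
    refine ⟨M, ?_⟩; rintro _ ⟨u, rfl⟩; exact hinner u
  have hMBM : MB ≤ M := ciSup_le hinner
  have hfMB : ∀ u ∈ Bᶜ, ‖f u‖ ≤ MB := by
    intro u hu
    have h := le_ciSup hMBbdd u
    rwa [ciSup_pos hu] at h
  -- measure preserving involution u ↦ x - u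
  have hT : ∀ x : Torus d, MeasurePreserving (fun u : Torus d => x - u) μ μ := by
    intro x
    rw [hμdef]; unfold torusMeasure
    haveI := Measure.pi.isNegInvariant
      (fun _ : Fin d => (AddCircle.haarAddCircle : Measure (AddCircle (2 * π))))
    haveI := Measure.pi.isAddLeftInvariant
      (fun _ : Fin d => (AddCircle.haarAddCircle : Measure (AddCircle (2 * π))))
    exact Measure.measurePreserving_sub_left _ x
  have hTemb : ∀ x : Torus d, MeasurableEmbedding (fun u : Torus d => x - u) := fun x =>
    (MeasurableEquiv.subLeft x).measurableEmbedding
  have hVess : ∀ᵐ v ∂μ, (‖V v‖₊ : ℝ≥0∞) ≤ eLpNorm V ⊤ μ := by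
    rw [eLpNorm_exponent_top, eLpNormEssSup]
    exact ENNReal.ae_le_essSup _
  have hVess' : ∀ x : Torus d, ∀ᵐ u ∂μ, (‖V (x - u)‖₊ : ℝ≥0∞) ≤ eLpNorm V ⊤ μ := by
    intro x
    refine ((hTemb x).ae_map_iff
      (p := fun v => (‖V v‖₊ : ℝ≥0∞) ≤ eLpNorm V ⊤ μ)).mp ?_
    rw [(hT x).map_eq]
    exact hVess
  have hVint : ∀ x : Torus d, ∫⁻ u, (‖V (x - u)‖₊ : ℝ≥0∞) ∂μ = eLpNorm V 1 μ := by
    intro x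
    rw [eLpNorm_one_eq_lintegral_enorm]
    exact (hT x).lintegral_comp_emb (hTemb x) (fun v => (‖V v‖₊ : ℝ≥0∞))
  -- pointwise bound on the lintegral of the norm of the integrand
  have hbase : ∀ x : Torus d, ENNReal.ofReal ‖f x‖ ≤ ∫⁻ u, ‖f u‖₊ * ‖V (x - u)‖₊ ∂μ := by
    intro x
    have h1 : ‖f x‖ ≤ (∫⁻ u, ENNReal.ofReal ‖f u * V (x - u)‖ ∂μ).toReal := by
      rw [hrep x]; exact norm_integral_le_lintegral_norm _
    have h2 : (∫⁻ u, ENNReal.ofReal ‖f u * V (x - u)‖ ∂μ)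
        = ∫⁻ u, ‖f u‖₊ * ‖V (x - u)‖₊ ∂μ := by
      congr 1; funext u
      rw [ofReal_norm, enorm_eq_nnnorm, nnnorm_mul]
      push_cast
      ring
    calc ENNReal.ofReal ‖f x‖
        ≤ ENNReal.ofReal (∫⁻ u, ENNReal.ofReal ‖f u * V (x - u)‖ ∂μ).toReal :=
          ENNReal.ofReal_le_ofReal h1
      _ ≤ ∫⁻ u, ENNReal.ofReal ‖f u * V (x - u)‖ ∂μ := ENNReal.ofReal_toReal_le
      _ = _ := h2
  -- degenerate case: ‖V‖₁ = 0
  by_cases hL1 : eLpNorm V 1 μ = 0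
  · have hf0 : ∀ x, f x = 0 := by
      intro x
      have h : ENNReal.ofReal ‖f x‖ ≤ 0 := by
        refine (hbase x).trans ?_
        calc ∫⁻ u, ‖f u‖₊ * ‖V (x - u)‖₊ ∂μ
            ≤ ∫⁻ u, ENNReal.ofReal M * ‖V (x - u)‖₊ ∂μ := by
              refine lintegral_mono fun u => ?_
              gcongr
              rw [← enorm_eq_nnnorm, ← ofReal_norm]
              exact ENNReal.ofReal_le_ofReal (hfM u)
          _ = ENNReal.ofReal M * ∫⁻ u, (‖V (x - u)‖₊ : ℝ≥0∞) ∂μ :=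
              lintegral_const_mul' _ _ ENNReal.ofReal_ne_top
          _ = ENNReal.ofReal M * eLpNorm V 1 μ := by rw [hVint x]
          _ = 0 := by rw [hL1, mul_zero]
      have : ‖f x‖ ≤ 0 := by
        have := ENNReal.toReal_mono (by simp) h
        simpa [ENNReal.toReal_ofReal (norm_nonneg (f x))] using this
      simpa using le_antisymm this (norm_nonneg _)
    have hMeq : M = 0 := le_antisymm (ciSup_le fun x => by simp [hf0 x]) hM0
    have hMBeq : MB = 0 := le_antisymm (by rw [← hMeq]; exact hMBM) hMB0
    constructor
    · rw [hMeq, hMBeq]; simp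
    · intro _; rw [hMeq, hMBeq]; simp
  -- main case
  have hV1pos : 0 < V1 := by
    by_contra h
    push_neg at h
    exact hL1 (by rw [hV1, ENNReal.ofReal_eq_zero]; exact h)
  have hVinf0 : 0 ≤ Vinf := by
    by_contra h
    push_neg at h
    have htop : eLpNorm V ⊤ μ = 0 := by
      rw [hVinf, ENNReal.ofReal_eq_zero]; exact h.le
    have hV0 : ∀ᵐ v ∂μ, (‖V v‖₊ : ℝ≥0∞) = 0 := by
      filter_upwards [hVess] with v hv
      rw [htop] at hv
      exact le_antisymm hv zero_le
    refine hL1 ?_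
    rw [eLpNorm_one_eq_lintegral_enorm]; simp_rw [enorm_eq_nnnorm]
    rw [lintegral_congr_ae hV0, lintegral_zero]
  have hμB : μ B ≠ ⊤ := (measure_lt_top μ B).ne
  -- key estimate
  have key : ∀ x : Torus d, ‖f x‖ ≤ MB * V1 + M * (Vinf * (μ B).toReal) := by
    intro x
    have hkey : ENNReal.ofReal ‖f x‖ ≤
        ENNReal.ofReal MB * eLpNorm V 1 μ +
          ENNReal.ofReal M * eLpNorm V ⊤ μ * μ B := by
      refine (hbase x).trans ?_
      have hptwise : ∀ᵐ u ∂μ, (‖f u‖₊ : ℝ≥0∞) * ‖V (x - u)‖₊ ≤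
          ENNReal.ofReal MB * ‖V (x - u)‖₊ +
            B.indicator (fun _ => ENNReal.ofReal M * eLpNorm V ⊤ μ) u := by
        filter_upwards [hVess' x] with u hu
        by_cases huB : u ∈ B
        · rw [Set.indicator_of_mem huB]
          calc (‖f u‖₊ : ℝ≥0∞) * ‖V (x - u)‖₊ ≤ ENNReal.ofReal M * eLpNorm V ⊤ μ := by
                gcongr
                rw [← enorm_eq_nnnorm, ← ofReal_norm]
                exact ENNReal.ofReal_le_ofReal (hfM u)
            _ ≤ _ := le_add_self
        · rw [Set.indicator_of_notMem huB, add_zero]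
          gcongr
          rw [← enorm_eq_nnnorm, ← ofReal_norm]
          exact ENNReal.ofReal_le_ofReal (hfMB u huB)
      calc ∫⁻ u, ‖f u‖₊ * ‖V (x - u)‖₊ ∂μ
          ≤ ∫⁻ u, (ENNReal.ofReal MB * ‖V (x - u)‖₊ +
              B.indicator (fun _ => ENNReal.ofReal M * eLpNorm V ⊤ μ) u) ∂μ :=
            lintegral_mono_ae hptwise
        _ = (∫⁻ u, ENNReal.ofReal MB * ‖V (x - u)‖₊ ∂μ) +
              ∫⁻ u, B.indicator (fun _ => ENNReal.ofReal M * eLpNorm V ⊤ μ) u ∂μ :=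
            lintegral_add_right _ (measurable_const.indicator hB)
        _ = ENNReal.ofReal MB * eLpNorm V 1 μ +
              ENNReal.ofReal M * eLpNorm V ⊤ μ * μ B := by
            rw [lintegral_const_mul' _ _ ENNReal.ofReal_ne_top, hVint x,
              lintegral_indicator_const hB]
    rw [hV1, hVinf] at hkey
    have hfin : ENNReal.ofReal MB * ENNReal.ofReal V1 +
        ENNReal.ofReal M * ENNReal.ofReal Vinf * μ B ≠ ⊤ := by
      refine ENNReal.add_ne_top.2 ⟨?_, ?_⟩
      · exact ENNReal.mul_ne_top ENNReal.ofReal_ne_top ENNReal.ofReal_ne_top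
      · exact ENNReal.mul_ne_top
          (ENNReal.mul_ne_top ENNReal.ofReal_ne_top ENNReal.ofReal_ne_top) hμB
    have := ENNReal.toReal_mono hfin hkey
    rw [ENNReal.toReal_ofReal (norm_nonneg _)] at this
    refine this.trans (le_of_eq ?_)
    rw [ENNReal.toReal_add (ENNReal.mul_ne_top ENNReal.ofReal_ne_top ENNReal.ofReal_ne_top)
        (ENNReal.mul_ne_top
          (ENNReal.mul_ne_top ENNReal.ofReal_ne_top ENNReal.ofReal_ne_top) hμB),
      ENNReal.toReal_mul, ENNReal.toReal_mul, ENNReal.toReal_mul,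
      ENNReal.toReal_ofReal hMB0, ENNReal.toReal_ofReal hV1pos.le,
      ENNReal.toReal_ofReal hM0, ENNReal.toReal_ofReal hVinf0]
    ring
  have hmain : M ≤ V1 * MB + (μ B).toReal * Vinf * M := by
    have := ciSup_le key
    calc M ≤ MB * V1 + M * (Vinf * (μ B).toReal) := this
      _ = V1 * MB + (μ B).toReal * Vinf * M := by ring
  refine ⟨hmain, fun hc => ?_⟩
  have h2 : (μ B).toReal * Vinf * M ≤ (1 / 2) * M :=
    mul_le_mul_of_nonneg_right hc hM0
  linarith

end

end RemezKernel
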